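/- Let θ, φ : [0,1] → ℝ be continuously differentiable, with θ not identically zero, the zero set of φ consisting of at most isolated points, and such that C_{θ,φ} is a copula (conditions (a)–(d)). Let Ĉ(u,v) = u + v − 1 + C_{θ,φ}(1−u, 1−v) be the survival copula of C_{θ,φ}. Then Ĉ is totally positive of order 2, i.e. Ĉ(u₁,v₁)·Ĉ(u₂,v₂) − Ĉ(u₁,v₂)·Ĉ(u₂,v₁) ≥ 0 for all 0 ≤ u₁ ≤ u₂ ≤ 1 and 0 ≤ v₁ ≤ v₂ ≤ 1 (right corner set increasing), if and only if the map u ↦ (v − C_{θ,φ}(u,v))/(1−u) is non-increasing on [0,1) for every v ∈ [0,1] (right tail increasing). -/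

import Mathlib

private lemma thetaAnti (θ φ : ℝ → ℝ) (M L : ℝ)
    (hφc : ContinuousOn φ (Set.Icc 0 1))
    (hrect : ∀ x y : ℝ, 0 ≤ x → x ≤ y → y ≤ 1 →
      0 ≤ (y - x)^2 + θ y * (φ y - φ x)^2 + (θ x - θ y) * (φ x)^2)
    (hM : ∀ x ∈ Set.Icc (0:ℝ) 1, |θ x| ≤ M)
    (hL : ∀ x ∈ Set.Icc (0:ℝ) 1, ∀ y ∈ Set.Icc (0:ℝ) 1, |φ y - φ x| ≤ L * |y - x|)
    (p q : ℝ) (hp : 0 ≤ p) (hpq : p ≤ q) (hq : q ≤ 1)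
    (hne : ∀ x ∈ Set.Icc p q, φ x ≠ 0) : θ q ≤ θ p := by
  rcases eq_or_lt_of_le hpq with rfl | hlt
  · exact le_rfl
  have hsub : Set.Icc p q ⊆ Set.Icc (0:ℝ) 1 := Set.Icc_subset_Icc hp hq
  have hpm : p ∈ Set.Icc p q := Set.left_mem_Icc.2 hpq
  obtain ⟨c, hcmem, hcmin⟩ :=
    isCompact_Icc.exists_isMinOn (Set.nonempty_of_mem hpm) ((hφc.mono hsub).pow 2)
  have hm0 : 0 < φ c ^ 2 := by
    have := hne c hcmem
    positivity
  set m := φ c ^ 2 with hm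
  have hM0 : 0 ≤ M := le_trans (abs_nonneg _) (hM 0 (by norm_num))
  have key : ∀ x y : ℝ, p ≤ x → x ≤ y → y ≤ q →
      (θ y - θ x) * m ≤ (1 + M * L^2) * (y - x)^2 := by
    intro x y hx hxy hy
    have hx01 : x ∈ Set.Icc (0:ℝ) 1 := hsub ⟨hx, le_trans hxy hy⟩
    have hy01 : y ∈ Set.Icc (0:ℝ) 1 := hsub ⟨le_trans hx hxy, hy⟩
    have h1 := hrect x y hx01.1 hxy hy01.2
    have hmx : m ≤ φ x ^ 2 := hcmin ⟨hx, le_trans hxy hy⟩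
    have hθy : θ y ≤ M := le_trans (le_abs_self _) (hM y hy01)
    have hφb : |φ y - φ x| ≤ L * (y - x) := by
      have := hL x hx01 y hy01
      rwa [abs_of_nonneg (sub_nonneg.2 hxy)] at this
    have habs := abs_le.mp hφb
    have hφ2 : (φ y - φ x)^2 ≤ (L * (y - x))^2 := sq_le_sq' habs.1 habs.2
    have hθterm : θ y * (φ y - φ x)^2 ≤ M * L^2 * (y - x)^2 := by
      nlinarith [sq_nonneg (φ y - φ x), sq_nonneg (L * (y - x))]
    rcases le_or_gt (θ y) (θ x) with h | h
    · have h2 : (θ y - θ x) * m ≤ 0 :=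
        mul_nonpos_of_nonpos_of_nonneg (by linarith) hm0.le
      nlinarith [sq_nonneg (y - x)]
    · have h3 : (θ y - θ x) * m ≤ (θ y - θ x) * (φ x ^ 2) :=
        mul_le_mul_of_nonneg_left hmx (by linarith)
      nlinarith
  by_contra hcon
  push_neg at hcon
  have hε0 : 0 < (θ q - θ p) * m := mul_pos (sub_pos.2 hcon) hm0
  have hQ0 : 0 ≤ (1 + M * L^2) * (q - p)^2 := by positivity
  obtain ⟨n, hn⟩ := exists_nat_gt ((1 + M * L^2) * (q - p)^2 / ((θ q - θ p) * m))
  have hn0 : (0:ℝ) < n := lt_of_le_of_lt (div_nonneg hQ0 hε0.le) hn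
  have hnne : (n:ℝ) ≠ 0 := ne_of_gt hn0
  have hbound : (θ q - θ p) * m ≤ (1 + M * L^2) * (q - p)^2 / n := by
    set d := (q - p) / n with hd
    have hd0 : 0 ≤ d := div_nonneg (by linarith) (Nat.cast_nonneg n)
    set x : ℕ → ℝ := fun i => p + i * d with hxdef
    have hxn : x n = q := by
      simp only [hxdef, hd]
      field_simp
      ring
    have hx0 : x 0 = p := by simp [hxdef]
    have hstep : ∀ i : ℕ, x (i+1) - x i = d := by
      intro i; simp only [hxdef]; push_cast; ring
    have hmem : ∀ i : ℕ, i ≤ n → p ≤ x i ∧ x i ≤ q := by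
      intro i hi
      have h1 : (0:ℝ) ≤ (i:ℝ) * d := mul_nonneg (Nat.cast_nonneg i) hd0
      have h2 : (i:ℝ) * d ≤ (n:ℝ) * d :=
        mul_le_mul_of_nonneg_right (by exact_mod_cast hi) hd0
      have h3 : p + (n:ℝ) * d = q := hxn
      constructor
      · simp only [hxdef]; linarith
      · simp only [hxdef]; linarith
    have hterm : ∀ i ∈ Finset.range n, θ (x (i+1)) * m - θ (x i) * m ≤ (1 + M*L^2) * d^2 := by
      intro i hi
      have hi' := Finset.mem_range.mp hi
      have hxy : x i ≤ x (i+1) := by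
        have := hstep i; linarith
      have h1 := key (x i) (x (i+1)) (hmem i hi'.le).1 hxy (hmem (i+1) hi').2
      rw [hstep i] at h1
      linarith
    have hsum := Finset.sum_le_sum hterm
    rw [Finset.sum_range_sub (fun i => θ (x i) * m) n, Finset.sum_const, Finset.card_range,
        hxn, hx0, nsmul_eq_mul] at hsum
    have heq : (n:ℝ) * ((1 + M*L^2) * d^2) = (1 + M*L^2) * (q - p)^2 / n := by
      rw [hd]; field_simp
    rw [heq] at hsum
    linarith
  have hlt2 : (1 + M * L^2) * (q - p)^2 / n < (θ q - θ p) * m := by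
    rw [div_lt_iff₀ hn0]
    have := (div_lt_iff₀ hε0).mp hn
    nlinarith
  linarith

private lemma kern2 (θ ψ : ℝ → ℝ) (hψ0 : ψ 0 = 0)
    (hknn : ∀ t : ℝ, 0 ≤ t → t < 1 → 0 ≤ θ t * ψ t)
    (hB : ∀ t a b : ℝ, 0 ≤ t → t < 1 → 0 ≤ a → a ≤ b → b < 1 →
      θ (max a t) * ψ a * ψ t ≤ θ (max b t) * ψ b * ψ t)
    (hθZ : ∀ p q : ℝ, 0 ≤ p → p ≤ q → q < 1 → 0 < ψ p →
      (∀ x : ℝ, p ≤ x → x ≤ q → ψ p ≤ ψ x) → θ q ≤ θ p) :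
    ∀ s₁ s₂ t₁ t₂ : ℝ, 0 ≤ s₁ → s₁ ≤ s₂ → s₂ < 1 → 0 ≤ t₁ → t₁ ≤ t₂ → t₂ < 1 →
      s₁ ≤ t₁ →
      0 ≤ (1 + θ (max s₁ t₁) * ψ s₁ * ψ t₁) * (1 + θ (max s₂ t₂) * ψ s₂ * ψ t₂)
        - (1 + θ (max s₁ t₂) * ψ s₁ * ψ t₂) * (1 + θ (max s₂ t₁) * ψ s₂ * ψ t₁) := by
  have hR1 : ∀ a b t : ℝ, 0 ≤ a → a ≤ b → b ≤ t → t < 1 →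
      θ t * ψ t * ψ a ≤ θ t * ψ t * ψ b := by
    intro a b t ha hab hbt ht1
    have h := hB t a b (le_trans (le_trans ha hab) hbt) ht1 ha hab (lt_of_le_of_lt hbt ht1)
    rw [max_eq_right (le_trans hab hbt), max_eq_right hbt] at h
    nlinarith [h]
  have hkmono : ∀ p q : ℝ, 0 ≤ p → p ≤ q → q < 1 → θ p * ψ p ≤ θ q * ψ q := by
    intro p q hp hpq hq1
    rcases le_or_gt (θ p * ψ p) 0 with h | h
    · exact le_trans h (hknn q (le_trans hp hpq) hq1)
    · have hp1 : p < 1 := lt_of_le_of_lt hpq hq1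
      have h1 := hR1 0 p p le_rfl hp le_rfl hp1
      rw [hψ0, mul_zero] at h1
      have hψp : 0 < ψ p := by
        rcases lt_trichotomy (ψ p) 0 with hlt | heq | hgt
        · nlinarith
        · rw [heq, mul_zero] at h; exact absurd h (lt_irrefl 0)
        · exact hgt
      have h2 := hB p p q hp hp1 hp hpq hq1
      rw [max_self, max_eq_left hpq] at h2
      have h3 : θ p * ψ p * ψ p ≤ θ q * ψ q * ψ p := by nlinarith [h2]
      exact le_of_mul_le_mul_right h3 hψp
  intro s₁ s₂ t₁ t₂ hs₁0 hs₁₂ hs₂1 ht₁0 ht₁₂ ht₂1 hst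
  have hs₁1 : s₁ < 1 := lt_of_le_of_lt hs₁₂ hs₂1
  have ht₁1 : t₁ < 1 := lt_of_le_of_lt ht₁₂ ht₂1
  have hs₁t₂ : s₁ ≤ t₂ := le_trans hst ht₁₂
  have hs₂0 : 0 ≤ s₂ := le_trans hs₁0 hs₁₂
  have ht₂0 : 0 ≤ t₂ := le_trans ht₁0 ht₁₂
  rcases le_total s₂ t₁ with hA | hAr
  · -- Case A : s₁ ≤ s₂ ≤ t₁ ≤ t₂
    rw [max_eq_right hst, max_eq_right (le_trans hA ht₁₂), max_eq_right hs₁t₂,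
        max_eq_right hA]
    have hk12 := hkmono t₁ t₂ ht₁0 ht₁₂ ht₂1
    rcases lt_or_ge 0 (θ t₂ * ψ t₂) with hpos | hz
    · have hψs : ψ s₁ ≤ ψ s₂ := by
        have := hR1 s₁ s₂ t₂ hs₁0 hs₁₂ (le_trans hA ht₁₂) ht₂1
        exact le_of_mul_le_mul_left this hpos
      nlinarith [mul_nonneg (sub_nonneg.2 hk12) (sub_nonneg.2 hψs)]
    · have hk₂ : θ t₂ * ψ t₂ = 0 := le_antisymm hz (hknn t₂ ht₂0 ht₂1)
      have hk₁ : θ t₁ * ψ t₁ = 0 := le_antisymm (by linarith) (hknn t₁ ht₁0 ht₁1)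
      have e1 : θ t₁ * ψ s₁ * ψ t₁ = 0 := by linear_combination ψ s₁ * hk₁
      have e2 : θ t₂ * ψ s₂ * ψ t₂ = 0 := by linear_combination ψ s₂ * hk₂
      have e3 : θ t₂ * ψ s₁ * ψ t₂ = 0 := by linear_combination ψ s₁ * hk₂
      have e4 : θ t₁ * ψ s₂ * ψ t₁ = 0 := by linear_combination ψ s₂ * hk₁
      rw [e1, e2, e3, e4]; norm_num
  · rcases le_total s₂ t₂ with hBc | hCc
    · -- Case B : s₁ ≤ t₁ ≤ s₂ ≤ t₂
      rw [max_eq_right hst, max_eq_right hBc, max_eq_right hs₁t₂, max_eq_left hAr]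
      rcases lt_or_ge 0 (θ t₂ * ψ t₂) with hpos | hz
      · have hψm : ∀ a b : ℝ, 0 ≤ a → a ≤ b → b ≤ t₂ → ψ a ≤ ψ b := by
          intro a b ha hab hb
          exact le_of_mul_le_mul_left (hR1 a b t₂ ha hab hb ht₂1) hpos
        have hαnn : 0 ≤ ψ s₁ := by
          have := hψm 0 s₁ le_rfl hs₁0 hs₁t₂; rwa [hψ0] at this
        have hβnn : 0 ≤ ψ t₁ := by
          have := hψm 0 t₁ le_rfl ht₁0 ht₁₂; rwa [hψ0] at this
        have hγnn : 0 ≤ ψ s₂ := by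
          have := hψm 0 s₂ le_rfl hs₂0 hBc; rwa [hψ0] at this
        by_cases hβpos : 0 < ψ t₁
        · have hγβ : ψ t₁ ≤ ψ s₂ := hψm t₁ s₂ ht₁0 hAr hBc
          have hγα : ψ s₁ ≤ ψ s₂ := hψm s₁ s₂ hs₁0 hs₁₂ hBc
          have hθ12 : θ s₂ ≤ θ t₁ :=
            hθZ t₁ s₂ ht₁0 hAr hs₂1 hβpos
              (fun x hx1 hx2 => hψm t₁ x ht₁0 hx1 (le_trans hx2 hBc))
          have hγpos : 0 < ψ s₂ := lt_of_lt_of_le hβpos hγβ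
          have hθ₂nn : 0 ≤ θ s₂ := by nlinarith [hknn s₂ hs₂0 hs₂1]
          have hK34 : θ s₂ * ψ s₂ ≤ θ t₂ * ψ t₂ := hkmono s₂ t₂ hs₂0 hBc ht₂1
          nlinarith [mul_nonneg (mul_nonneg (mul_nonneg (mul_nonneg hpos.le hαnn) hβnn) hγnn)
              (sub_nonneg.2 hθ12),
            mul_nonneg (sub_nonneg.2 hK34) (sub_nonneg.2 hγα),
            mul_nonneg (mul_nonneg hθ₂nn (sub_nonneg.2 hγα)) (sub_nonneg.2 hγβ),
            mul_nonneg (mul_nonneg (sub_nonneg.2 hθ12) hβnn) hαnn]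
        · have hβ : ψ t₁ = 0 := le_antisymm (not_lt.mp hβpos) hβnn
          have hα : ψ s₁ = 0 := by
            have h := hψm s₁ t₁ hs₁0 hst ht₁₂
            rw [hβ] at h
            exact le_antisymm h hαnn
          rw [hα, hβ]
          nlinarith [mul_nonneg (hknn t₂ ht₂0 ht₂1) hγnn]
      · have hk4 : θ t₂ * ψ t₂ = 0 := le_antisymm hz (hknn t₂ ht₂0 ht₂1)
        have hk2 : θ t₁ * ψ t₁ = 0 :=
          le_antisymm (le_trans (hkmono t₁ t₂ ht₁0 ht₁₂ ht₂1) hz) (hknn t₁ ht₁0 ht₁1)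
        have hk3 : θ s₂ * ψ s₂ = 0 :=
          le_antisymm (le_trans (hkmono s₂ t₂ hs₂0 hBc ht₂1) hz) (hknn s₂ hs₂0 hs₂1)
        have e1 : θ t₁ * ψ s₁ * ψ t₁ = 0 := by linear_combination ψ s₁ * hk2
        have e2 : θ t₂ * ψ s₂ * ψ t₂ = 0 := by linear_combination ψ s₂ * hk4
        have e3 : θ t₂ * ψ s₁ * ψ t₂ = 0 := by linear_combination ψ s₁ * hk4
        have e4 : θ s₂ * ψ s₂ * ψ t₁ = 0 := by linear_combination ψ t₁ * hk3
        rw [e1, e2, e3, e4]; norm_num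
    · -- Case C : s₁ ≤ t₁ ≤ t₂ ≤ s₂
      rw [max_eq_right hst, max_eq_left hCc, max_eq_right hs₁t₂, max_eq_left hAr]
      rcases lt_or_ge 0 (θ s₂ * ψ s₂) with hpos | hz
      · have hψm : ∀ a b : ℝ, 0 ≤ a → a ≤ b → b ≤ s₂ → ψ a ≤ ψ b := by
          intro a b ha hab hb
          exact le_of_mul_le_mul_left (hR1 a b s₂ ha hab hb hs₂1) hpos
        have hαnn : 0 ≤ ψ s₁ := by
          have := hψm 0 s₁ le_rfl hs₁0 hs₁₂; rwa [hψ0] at this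
        have hβnn : 0 ≤ ψ t₁ := by
          have := hψm 0 t₁ le_rfl ht₁0 (le_trans ht₁₂ hCc); rwa [hψ0] at this
        have hδnn : 0 ≤ ψ t₂ := by
          have := hψm 0 t₂ le_rfl ht₂0 hCc; rwa [hψ0] at this
        by_cases hβpos : 0 < ψ t₁
        · have hθab : θ t₂ ≤ θ t₁ :=
            hθZ t₁ t₂ ht₁0 ht₁₂ ht₂1 hβpos
              (fun x hx1 hx2 => hψm t₁ x ht₁0 hx1 (le_trans hx2 hCc))
          have hβδ : ψ t₁ ≤ ψ t₂ := hψm t₁ t₂ ht₁0 ht₁₂ hCc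
          have hαβ : ψ s₁ ≤ ψ t₁ := hψm s₁ t₁ hs₁0 hst (le_trans ht₁₂ hCc)
          have hδpos : 0 < ψ t₂ := lt_of_lt_of_le hβpos hβδ
          have hθb : 0 ≤ θ t₂ := by nlinarith [hknn t₂ ht₂0 ht₂1]
          have hK24 : θ t₁ * ψ t₁ ≤ θ t₂ * ψ t₂ := hkmono t₁ t₂ ht₁0 ht₁₂ ht₂1
          have hK43 : θ t₂ * ψ t₂ ≤ θ s₂ * ψ s₂ := hkmono t₂ s₂ ht₂0 hCc hs₂1
          have hθbβ : θ t₂ * ψ t₁ ≤ θ s₂ * ψ s₂ :=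
            le_trans (mul_le_mul_of_nonneg_left hβδ hθb) hK43
          nlinarith [mul_nonneg (mul_nonneg (mul_nonneg (mul_nonneg hpos.le hαnn) hβnn) hδnn)
              (sub_nonneg.2 hθab),
            mul_nonneg (sub_nonneg.2 hαβ) (sub_nonneg.2 hK24),
            mul_nonneg (mul_nonneg hβnn hβnn) (sub_nonneg.2 hθab),
            mul_nonneg (sub_nonneg.2 hθbβ) (sub_nonneg.2 hβδ)]
        · have hβ : ψ t₁ = 0 := by
            have hβnn' := hβnn
            exact le_antisymm (not_lt.mp hβpos) hβnn'
          have hα : ψ s₁ = 0 := by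
            have h := hψm s₁ t₁ hs₁0 hst (le_trans ht₁₂ hCc)
            rw [hβ] at h
            exact le_antisymm h hαnn
          rw [hα, hβ]
          nlinarith [mul_nonneg hpos.le hδnn]
      · have hk3 : θ s₂ * ψ s₂ = 0 := le_antisymm hz (hknn s₂ hs₂0 hs₂1)
        have hk2 : θ t₁ * ψ t₁ = 0 :=
          le_antisymm (le_trans (hkmono t₁ s₂ ht₁0 (le_trans ht₁₂ hCc) hs₂1) hz)
            (hknn t₁ ht₁0 ht₁1)
        have hk4 : θ t₂ * ψ t₂ = 0 :=
          le_antisymm (le_trans (hkmono t₂ s₂ ht₂0 hCc hs₂1) hz) (hknn t₂ ht₂0 ht₂1)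
        have e1 : θ t₁ * ψ s₁ * ψ t₁ = 0 := by linear_combination ψ s₁ * hk2
        have e2 : θ s₂ * ψ s₂ * ψ t₂ = 0 := by linear_combination ψ t₂ * hk3
        have e3 : θ t₂ * ψ s₁ * ψ t₂ = 0 := by linear_combination ψ s₁ * hk4
        have e4 : θ s₂ * ψ s₂ * ψ t₁ = 0 := by linear_combination ψ t₁ * hk3
        rw [e1, e2, e3, e4]; norm_num

private lemma kern (θ ψ : ℝ → ℝ) (hψ0 : ψ 0 = 0)
    (hknn : ∀ t : ℝ, 0 ≤ t → t < 1 → 0 ≤ θ t * ψ t)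
    (hB : ∀ t a b : ℝ, 0 ≤ t → t < 1 → 0 ≤ a → a ≤ b → b < 1 →
      θ (max a t) * ψ a * ψ t ≤ θ (max b t) * ψ b * ψ t)
    (hθZ : ∀ p q : ℝ, 0 ≤ p → p ≤ q → q < 1 → 0 < ψ p →
      (∀ x : ℝ, p ≤ x → x ≤ q → ψ p ≤ ψ x) → θ q ≤ θ p) :
    ∀ s₁ s₂ t₁ t₂ : ℝ, 0 ≤ s₁ → s₁ ≤ s₂ → s₂ < 1 → 0 ≤ t₁ → t₁ ≤ t₂ → t₂ < 1 →
      0 ≤ (1 + θ (max s₁ t₁) * ψ s₁ * ψ t₁) * (1 + θ (max s₂ t₂) * ψ s₂ * ψ t₂)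
        - (1 + θ (max s₁ t₂) * ψ s₁ * ψ t₂) * (1 + θ (max s₂ t₁) * ψ s₂ * ψ t₁) := by
  intro s₁ s₂ t₁ t₂ h1 h2 h3 h4 h5 h6
  rcases le_total s₁ t₁ with h | h
  · exact kern2 θ ψ hψ0 hknn hB hθZ s₁ s₂ t₁ t₂ h1 h2 h3 h4 h5 h6 h
  · have hsw := kern2 θ ψ hψ0 hknn hB hθZ t₁ t₂ s₁ s₂ h4 h5 h6 h1 h2 h3 h
    rw [max_comm t₁ s₁, max_comm t₂ s₂, max_comm t₁ s₂, max_comm t₂ s₁] at hsw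
    nlinarith [hsw]
private lemma kernNeg (θ ψ : ℝ → ℝ) (hψ0 : ψ 0 = 0)
    (hknn : ∀ t : ℝ, 0 ≤ t → t < 1 → θ t * ψ t ≤ 0)
    (hB : ∀ t a b : ℝ, 0 ≤ t → t < 1 → 0 ≤ a → a ≤ b → b < 1 →
      θ (max a t) * ψ a * ψ t ≤ θ (max b t) * ψ b * ψ t)
    (hθZ : ∀ p q : ℝ, 0 ≤ p → p ≤ q → q < 1 → 0 < -ψ p →
      (∀ x : ℝ, p ≤ x → x ≤ q → -ψ p ≤ -ψ x) → θ q ≤ θ p) :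
    ∀ s₁ s₂ t₁ t₂ : ℝ, 0 ≤ s₁ → s₁ ≤ s₂ → s₂ < 1 → 0 ≤ t₁ → t₁ ≤ t₂ → t₂ < 1 →
      0 ≤ (1 + θ (max s₁ t₁) * ψ s₁ * ψ t₁) * (1 + θ (max s₂ t₂) * ψ s₂ * ψ t₂)
        - (1 + θ (max s₁ t₂) * ψ s₁ * ψ t₂) * (1 + θ (max s₂ t₁) * ψ s₂ * ψ t₁) := by
  intro s₁ s₂ t₁ t₂ h1 h2 h3 h4 h5 h6
  have hR' := kern θ (fun x => -ψ x) (by simp [hψ0])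
    (fun t ht0 ht1 => by nlinarith [hknn t ht0 ht1])
    (fun t a b ht0 ht1 ha hab hb => by nlinarith [hB t a b ht0 ht1 ha hab hb])
    hθZ s₁ s₂ t₁ t₂ h1 h2 h3 h4 h5 h6
  nlinarith [hR']

/-- A bivariate copula on `[0,1]²`, given as a function `ℝ → ℝ → ℝ`. -/
def IsCopula (C : ℝ → ℝ → ℝ) : Prop :=
  (∀ u ∈ Set.Icc (0:ℝ) 1, C u 0 = 0 ∧ C 0 u = 0) ∧
  (∀ u ∈ Set.Icc (0:ℝ) 1, C u 1 = u ∧ C 1 u = u) ∧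
  (∀ u₁ u₂ v₁ v₂ : ℝ, 0 ≤ u₁ → u₁ ≤ u₂ → u₂ ≤ 1 → 0 ≤ v₁ → v₁ ≤ v₂ → v₂ ≤ 1 →
    C u₂ v₂ - C u₂ v₁ - C u₁ v₂ + C u₁ v₁ ≥ 0)

theorem stmt10 (θ φ : ℝ → ℝ)
    (hθ : ContDiffOn ℝ 1 θ (Set.Icc 0 1))
    (hφ : ContDiffOn ℝ 1 φ (Set.Icc 0 1))
    (hθne : ∃ u ∈ Set.Icc (0:ℝ) 1, θ u ≠ 0)
    (hφiso : ∀ u ∈ Set.Icc (0:ℝ) 1, φ u = 0 →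
      ∃ ε > 0, ∀ x ∈ Set.Icc (0:ℝ) 1, x ≠ u → |x - u| < ε → φ x ≠ 0)
    (hC : IsCopula (fun u v => u * v + θ (max u v) * φ u * φ v))
    (Chat : ℝ → ℝ → ℝ)
    (hChat : ∀ u v : ℝ, Chat u v =
      u + v - 1 + ((1 - u) * (1 - v) + θ (max (1 - u) (1 - v)) * φ (1 - u) * φ (1 - v))) :
    (∀ u₁ u₂ v₁ v₂ : ℝ, 0 ≤ u₁ → u₁ ≤ u₂ → u₂ ≤ 1 → 0 ≤ v₁ → v₁ ≤ v₂ → v₂ ≤ 1 →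
        Chat u₁ v₁ * Chat u₂ v₂ - Chat u₁ v₂ * Chat u₂ v₁ ≥ 0) ↔
      (∀ v ∈ Set.Icc (0:ℝ) 1,
        AntitoneOn (fun u => (v - (u * v + θ (max u v) * φ u * φ v)) / (1 - u))
          (Set.Ico 0 1)) := by
  have hφc : ContinuousOn φ (Set.Icc 0 1) := hφ.continuousOn
  -- φ is not identically 0
  have hφne : ∃ u ∈ Set.Icc (0:ℝ) 1, φ u ≠ 0 := by
    by_contra hall
    push_neg at hall
    have h12 : φ (1/2) = 0 := hall (1/2) (by norm_num)
    obtain ⟨ε, hε, hx⟩ := hφiso (1/2) (by norm_num) h12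
    have hminpos : 0 < min ε (1/2) := lt_min hε (by norm_num)
    have hminle : min ε (1/2) ≤ 1/2 := min_le_right _ _
    have hminε : min ε (1/2) ≤ ε := min_le_left _ _
    have hmem : (1/2 + min ε (1/2)/2) ∈ Set.Icc (0:ℝ) 1 := by
      constructor <;> [linarith; linarith]
    refine hx _ hmem (ne_of_gt (by linarith)) ?_ (hall _ hmem)
    rw [show (1/2 + min ε (1/2)/2) - (1/2:ℝ) = min ε (1/2)/2 from by ring,
      abs_of_pos (by linarith)]
    linarith
  obtain ⟨u₀f, hu₀f, hφu₀f⟩ := hφne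
  have hθφ1 : θ 1 * φ 1 = 0 := by
    have h := (hC.2.1 u₀f hu₀f).1
    dsimp only at h
    rw [max_eq_right hu₀f.2] at h
    have h2 : (θ 1 * φ 1) * φ u₀f = 0 := by linarith [h]
    rcases mul_eq_zero.mp h2 with h3 | h3
    · exact h3
    · exact absurd h3 hφu₀f
  -- φ 0 = 0
  have h0 : φ 0 = 0 := by
    by_contra hφ0
    obtain ⟨u₀, hu₀, hθu₀⟩ := hθne
    have hzero : ∀ x ∈ Set.Icc (0:ℝ) 1, θ x ≠ 0 → φ x = 0 := by
      intro x hx hθx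
      have h := (hC.1 x hx).2
      dsimp only at h
      rw [max_eq_right hx.1] at h
      have h2 : (φ x) * (θ x * φ 0) = 0 := by linarith [h]
      rcases mul_eq_zero.mp h2 with h3 | h3
      · exact h3
      · rcases mul_eq_zero.mp h3 with h4 | h4
        · exact absurd h4 hθx
        · exact absurd h4 hφ0
    have hφu₀ : φ u₀ = 0 := hzero u₀ hu₀ hθu₀
    obtain ⟨ε, hε, hiso⟩ := hφiso u₀ hu₀ hφu₀
    have hcont : ContinuousWithinAt θ (Set.Icc 0 1) u₀ := (hθ.continuousOn) u₀ hu₀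
    have hev : ∀ᶠ x in nhdsWithin u₀ (Set.Icc 0 1), θ x ≠ 0 := hcont.eventually_ne hθu₀
    rw [Filter.eventually_iff, Metric.mem_nhdsWithin_iff] at hev
    obtain ⟨δ, hδ, hsubball⟩ := hev
    have hball : ∀ x ∈ Set.Icc (0:ℝ) 1, dist x u₀ < δ → θ x ≠ 0 :=
      fun x hx hd => hsubball ⟨Metric.mem_ball.mpr hd, hx⟩
    rcases lt_or_ge u₀ 1 with h1 | h1
    · set r := min (min ε δ) (1 - u₀) / 2 with hr
      have hrpos : 0 < r := by
        have := lt_min (lt_min hε hδ) (show (0:ℝ) < 1 - u₀ by linarith)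
        rw [hr]; linarith
      have hr1 : r ≤ (1 - u₀)/2 := by
        have := min_le_right (min ε δ) (1 - u₀); rw [hr]; linarith
      have hr2 : r ≤ ε/2 := by
        have h2 := min_le_left (min ε δ) (1 - u₀)
        have h3 := min_le_left ε δ
        rw [hr]; linarith
      have hr3 : r ≤ δ/2 := by
        have h2 := min_le_left (min ε δ) (1 - u₀)
        have h3 := min_le_right ε δ
        rw [hr]; linarith
      have hxmem : u₀ + r ∈ Set.Icc (0:ℝ) 1 := ⟨by linarith [hu₀.1], by linarith⟩
      have hdist : dist (u₀ + r) u₀ < δ := by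
        rw [Real.dist_eq, show u₀ + r - u₀ = r from by ring, abs_of_pos hrpos]
        linarith
      have hθx : θ (u₀ + r) ≠ 0 := hball _ hxmem hdist
      have hφx : φ (u₀ + r) = 0 := hzero _ hxmem hθx
      refine hiso _ hxmem (ne_of_gt (by linarith)) ?_ hφx
      rw [show u₀ + r - u₀ = r from by ring, abs_of_pos hrpos]
      linarith
    · set r := min (min ε δ) 1 / 2 with hr
      have hrpos : 0 < r := by
        have := lt_min (lt_min hε hδ) (show (0:ℝ) < 1 by norm_num)
        rw [hr]; linarith
      have hr1 : r ≤ 1/2 := by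
        have := min_le_right (min ε δ) 1; rw [hr]; linarith
      have hr2 : r ≤ ε/2 := by
        have h2 := min_le_left (min ε δ) 1
        have h3 := min_le_left ε δ
        rw [hr]; linarith
      have hr3 : r ≤ δ/2 := by
        have h2 := min_le_left (min ε δ) 1
        have h3 := min_le_right ε δ
        rw [hr]; linarith
      have hxmem : u₀ - r ∈ Set.Icc (0:ℝ) 1 := ⟨by linarith, by linarith [hu₀.2]⟩
      have hdist : dist (u₀ - r) u₀ < δ := by
        rw [Real.dist_eq, show u₀ - r - u₀ = -r from by ring, abs_neg, abs_of_pos hrpos]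
        linarith
      have hθx : θ (u₀ - r) ≠ 0 := hball _ hxmem hdist
      have hφx : φ (u₀ - r) = 0 := hzero _ hxmem hθx
      refine hiso _ hxmem (ne_of_lt (by linarith)) ?_ hφx
      rw [show u₀ - r - u₀ = -r from by ring, abs_neg, abs_of_pos hrpos]
      linarith
  constructor
  · -- TP2 → RTI
    intro hTP2 v hv
    intro a ha b hb hab
    dsimp only
    have ha1 : a < 1 := lt_of_le_of_lt hab hb.2
    have hb1 : b < 1 := hb.2
    rw [div_le_div_iff₀ (by linarith) (by linarith)]
    have h := hTP2 (1-b) (1-a) (1-v) 1 (by linarith) (by linarith) (by linarith [ha.1])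
      (by linarith [hv.2]) (by linarith [hv.1]) le_rfl
    rw [hChat (1-b) (1-v), hChat (1-a) 1, hChat (1-b) 1, hChat (1-a) (1-v)] at h
    rw [show (1:ℝ) - (1-b) = b from by ring, show (1:ℝ) - (1-a) = a from by ring,
        show (1:ℝ) - (1-v) = v from by ring, show (1:ℝ) - 1 = 0 from by ring, h0] at h
    nlinarith [h]
  · -- RTI → TP2
    intro hRTI u₁ u₂ v₁ v₂ hu₁ hu12 hu₂ hv₁ hv12 hv₂
    -- bounds for θ and Lipschitz constant for φ
    obtain ⟨M, hMb⟩ := isCompact_Icc.exists_bound_of_continuousOn hθ.continuousOn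
    have hM : ∀ x ∈ Set.Icc (0:ℝ) 1, |θ x| ≤ M := by
      intro x hx; have := hMb x hx; rwa [Real.norm_eq_abs] at this
    have hφdiff : DifferentiableOn ℝ φ (Set.Icc 0 1) := hφ.differentiableOn one_ne_zero
    have hφ'c : ContinuousOn (derivWithin φ (Set.Icc 0 1)) (Set.Icc 0 1) :=
      hφ.continuousOn_derivWithin (uniqueDiffOn_Icc zero_lt_one) le_rfl
    obtain ⟨L, hLb⟩ := isCompact_Icc.exists_bound_of_continuousOn hφ'c
    have hL : ∀ x ∈ Set.Icc (0:ℝ) 1, ∀ y ∈ Set.Icc (0:ℝ) 1, |φ y - φ x| ≤ L * |y - x| := by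
      intro x hx y hy
      have := (convex_Icc (0:ℝ) 1).norm_image_sub_le_of_norm_derivWithin_le hφdiff hLb hx hy
      rwa [Real.norm_eq_abs, Real.norm_eq_abs] at this
    have hrect : ∀ x y : ℝ, 0 ≤ x → x ≤ y → y ≤ 1 →
        0 ≤ (y-x)^2 + θ y * (φ y - φ x)^2 + (θ x - θ y) * (φ x)^2 := by
      intro x y hx hxy hy
      have h := hC.2.2 x y x y hx hxy hy hx hxy hy
      dsimp only at h
      rw [max_self y, max_self x, max_eq_left hxy, max_eq_right hxy] at h
      nlinarith [h]
    set ψ : ℝ → ℝ := fun x => φ x / (1 - x) with hψdef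
    have hφψ : ∀ x : ℝ, x < 1 → φ x = (1 - x) * ψ x := by
      intro x hx
      have hne : (1:ℝ) - x ≠ 0 := ne_of_gt (by linarith)
      simp only [hψdef]
      field_simp
    have hψ0 : ψ 0 = 0 := by simp [hψdef, h0]
    have hBmon : ∀ t a b : ℝ, 0 ≤ t → t < 1 → 0 ≤ a → a ≤ b → b < 1 →
        θ (max a t) * ψ a * ψ t ≤ θ (max b t) * ψ b * ψ t := by
      intro t a b ht0 ht1 ha0 hab hb1
      have ha1 : a < 1 := lt_of_le_of_lt hab hb1
      have h := hRTI t ⟨ht0, ht1.le⟩ (Set.mem_Ico.mpr ⟨ha0, ha1⟩)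
        (Set.mem_Ico.mpr ⟨le_trans ha0 hab, hb1⟩) hab
      dsimp only at h
      rw [div_le_div_iff₀ (by linarith) (by linarith)] at h
      rw [hφψ a ha1, hφψ b hb1, hφψ t ht1] at h
      have h2 : θ (max a t) * ψ a * ψ t * ((1-t)*(1-a)*(1-b)) ≤
          θ (max b t) * ψ b * ψ t * ((1-t)*(1-a)*(1-b)) := by nlinarith [h]
      exact le_of_mul_le_mul_right h2
        (mul_pos (mul_pos (by linarith) (by linarith)) (by linarith))
    have hθZpos : ∀ p q : ℝ, 0 ≤ p → p ≤ q → q < 1 → 0 < ψ p →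
        (∀ x : ℝ, p ≤ x → x ≤ q → ψ p ≤ ψ x) → θ q ≤ θ p := by
      intro p q hp hpq hq hψp hmono
      refine thetaAnti θ φ M L hφc hrect hM hL p q hp hpq hq.le ?_
      intro x hx
      have hx1 : x < 1 := lt_of_le_of_lt hx.2 hq
      have h1 : 0 < ψ x := lt_of_lt_of_le hψp (hmono x hx.1 hx.2)
      rw [hφψ x hx1]
      exact ne_of_gt (mul_pos (by linarith) h1)
    have hθZneg : ∀ p q : ℝ, 0 ≤ p → p ≤ q → q < 1 → 0 < -ψ p →
        (∀ x : ℝ, p ≤ x → x ≤ q → -ψ p ≤ -ψ x) → θ q ≤ θ p := by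
      intro p q hp hpq hq hψp hmono
      refine thetaAnti θ φ M L hφc hrect hM hL p q hp hpq hq.le ?_
      intro x hx
      have hx1 : x < 1 := lt_of_le_of_lt hx.2 hq
      have h1 : ψ x < 0 := by have := hmono x hx.1 hx.2; linarith
      rw [hφψ x hx1]
      exact ne_of_lt (mul_neg_of_pos_of_neg (by linarith) h1)
    have hdich : (∀ t : ℝ, 0 ≤ t → t < 1 → 0 ≤ θ t * ψ t) ∨
        (∀ t : ℝ, 0 ≤ t → t < 1 → θ t * ψ t ≤ 0) := by
      by_contra hcon
      push_neg at hcon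
      obtain ⟨⟨p, hp0, hp1, hpneg⟩, ⟨q, hq0, hq1, hqpos⟩⟩ := hcon
      rcases le_total p q with hpqle | hqple
      · have h1 := hBmon q 0 p hq0 hq1 le_rfl hp0 (lt_of_le_of_lt hpqle hq1)
        rw [max_eq_right hq0, max_eq_right hpqle, hψ0] at h1
        have hψpnn : 0 ≤ ψ p := by nlinarith [h1, hqpos]
        have h2 := hBmon p 0 p hp0 hp1 le_rfl hp0 hp1
        rw [max_eq_right hp0, max_self, hψ0] at h2
        have hψpnp : ψ p ≤ 0 := by nlinarith [h2, hpneg]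
        have hψpz : ψ p = 0 := le_antisymm hψpnp hψpnn
        rw [hψpz, mul_zero] at hpneg
        exact lt_irrefl 0 hpneg
      · have h1 := hBmon p 0 q hp0 hp1 le_rfl hq0 (lt_of_le_of_lt hqple hp1)
        rw [max_eq_right hp0, max_eq_right hqple, hψ0] at h1
        have hψqnp : ψ q ≤ 0 := by nlinarith [h1, hpneg]
        have h2 := hBmon q 0 q hq0 hq1 le_rfl hq0 hq1
        rw [max_eq_right hq0, max_self, hψ0] at h2
        have hψqnn : 0 ≤ ψ q := by nlinarith [h2, hqpos]
        have hψqz : ψ q = 0 := le_antisymm hψqnp hψqnn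
        rw [hψqz, mul_zero] at hqpos
        exact lt_irrefl 0 hqpos
    clear_value ψ
    have key : ∀ u v : ℝ, Chat u v =
        (1 - (1-u)) * (1 - (1-v)) + θ (max (1-u) (1-v)) * φ (1-u) * φ (1-v) := by
      intro u v; rw [hChat]; ring
    rw [ge_iff_le, key u₁ v₁, key u₂ v₂, key u₁ v₂, key u₂ v₁]
    set s₂ := 1 - u₁ with hs₂def
    set s₁ := 1 - u₂ with hs₁def
    set t₂ := 1 - v₁ with ht₂def
    set t₁ := 1 - v₂ with ht₁def
    have hs₁0 : 0 ≤ s₁ := by rw [hs₁def]; linarith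
    have hs₁₂ : s₁ ≤ s₂ := by rw [hs₁def, hs₂def]; linarith
    have hs₂le : s₂ ≤ 1 := by rw [hs₂def]; linarith
    have ht₁0 : 0 ≤ t₁ := by rw [ht₁def]; linarith
    have ht₁₂ : t₁ ≤ t₂ := by rw [ht₁def, ht₂def]; linarith
    have ht₂le : t₂ ≤ 1 := by rw [ht₂def]; linarith
    clear_value s₂ s₁ t₂ t₁
    have hz1 : ∀ s : ℝ, θ 1 * φ 1 * φ s = 0 := by
      intro s; linear_combination φ s * hθφ1
    have hz2 : ∀ s : ℝ, θ 1 * φ s * φ 1 = 0 := by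
      intro s; linear_combination φ s * hθφ1
    rcases eq_or_lt_of_le hs₂le with heq | hs₂1
    · rw [heq, max_eq_left ht₂le, max_eq_left (le_trans ht₁₂ ht₂le), hz1 t₂, hz1 t₁]
      norm_num
    · rcases eq_or_lt_of_le ht₂le with heq | ht₂1
      · rw [heq, max_eq_right (le_trans hs₁₂ hs₂1.le), max_eq_right hs₂1.le, hz2 s₂, hz2 s₁]
        norm_num
      · have hs₁1 : s₁ < 1 := lt_of_le_of_lt hs₁₂ hs₂1
        have ht₁1 : t₁ < 1 := lt_of_le_of_lt ht₁₂ ht₂1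
        rw [hφψ s₁ hs₁1, hφψ s₂ hs₂1, hφψ t₁ ht₁1, hφψ t₂ ht₂1]
        have hR : 0 ≤ (1 + θ (max s₁ t₁) * ψ s₁ * ψ t₁) * (1 + θ (max s₂ t₂) * ψ s₂ * ψ t₂)
            - (1 + θ (max s₁ t₂) * ψ s₁ * ψ t₂) * (1 + θ (max s₂ t₁) * ψ s₂ * ψ t₁) := by
          rcases hdich with hpos | hneg
          · exact kern θ ψ hψ0 hpos hBmon hθZpos s₁ s₂ t₁ t₂ hs₁0 hs₁₂ hs₂1 ht₁0 ht₁₂ ht₂1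
          · exact kernNeg θ ψ hψ0 hneg hBmon hθZneg s₁ s₂ t₁ t₂ hs₁0 hs₁₂ hs₂1 ht₁0 ht₁₂ ht₂1
        have hpos4 : 0 < (1 - s₁) * (1 - s₂) * ((1 - t₁) * (1 - t₂)) :=
          mul_pos (mul_pos (by linarith) (by linarith)) (mul_pos (by linarith) (by linarith))
        linarith [mul_nonneg hpos4.le hR]
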